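/- Let X = C([0,1], ℝ³) be the space of continuous maps from [0,1] to ℝ³ equipped with the supremum norm, let E_s := 4·√(s(1−s)/(2π)) and c_E := ∫₀¹ E_s² ds, and define Γ : X → ℝ by Γ(ψ) = ∫₀¹ ‖ψ(s)‖ · (E_s/c_E) ds. Let φ ∈ X be such that the closure of the set {s ∈ [0,1] : φ(s) = 0} has Lebesgue measure zero. Then Γ is Fréchet differentiable at φ, and its Fréchet derivative is the continuous linear map h ↦ ∫₀¹ ( ⟨φ(s), h(s)⟩ / ‖φ(s)‖ ) · (E_s/c_E) ds, where the integrand is defined for almost every s (and set to 0 where φ(s) = 0). -/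

import Mathlib

open MeasureTheory

/-- The mean of the Brownian excursion at time `s`. -/
noncomputable def excMean (s : ℝ) : ℝ := 4 * Real.sqrt (s * (1 - s) / (2 * Real.pi))

/-- The normalizing constant `c_E = ∫₀¹ E_s² ds`. -/
noncomputable def cE : ℝ := ∫ s in (0 : ℝ)..1, (excMean s) ^ 2

/-- The functional `Γ(ψ) = ∫₀¹ ‖ψ(s)‖ (E_s / c_E) ds` on `C([0,1], ℝ³)`. -/
noncomputable def GammaFun
    (ψ : C(Set.Icc (0 : ℝ) 1, EuclideanSpace ℝ (Fin 3))) : ℝ :=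
  ∫ s in (0 : ℝ)..1, ‖Set.IccExtend zero_le_one (⇑ψ) s‖ * (excMean s / cE)


open Set

lemma excMean_cont : Continuous excMean := by
  unfold excMean; fun_prop

lemma excMean_nonneg (s : ℝ) : 0 ≤ excMean s := by
  unfold excMean; positivity

lemma excMean_le (s : ℝ) : excMean s ≤ 4 := by
  unfold excMean
  have h1 : s * (1 - s) / (2 * Real.pi) ≤ 1 := by
    rw [div_le_one (by positivity)]
    nlinarith [Real.pi_gt_three, sq_nonneg (s - 1/2)]
  nlinarith [(Real.sqrt_le_one (x := s * (1 - s) / (2 * Real.pi))).2 h1,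
    Real.sqrt_nonneg (s * (1 - s) / (2 * Real.pi))]

lemma cE_eq : cE = 4 / (3 * Real.pi) := by
  unfold cE
  have h : ∀ s ∈ Set.uIcc (0:ℝ) 1, (excMean s) ^ 2 = (8 / Real.pi) * s - (8/Real.pi) * s ^ 2 := by
    intro s hs
    rw [Set.uIcc_of_le zero_le_one] at hs
    have hnn : 0 ≤ s * (1-s) := mul_nonneg hs.1 (by linarith [hs.2])
    unfold excMean
    rw [mul_pow, Real.sq_sqrt (by positivity)]
    field_simp
    ring
  rw [intervalIntegral.integral_congr h,
    intervalIntegral.integral_sub ((intervalIntegral.intervalIntegrable_id).const_mul _)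
      ((intervalIntegral.intervalIntegrable_pow 2).const_mul _),
    intervalIntegral.integral_const_mul, intervalIntegral.integral_const_mul,
    integral_id, integral_pow]
  have hpi := Real.pi_pos
  field_simp
  ring

lemma cE_pos : 0 < cE := by
  rw [cE_eq]
  have := Real.pi_pos
  positivity

section InnerLemmas
variable {E : Type*} [NormedAddCommGroup E] [InnerProductSpace ℝ E]

lemma rem_nonneg (x y : E) : 0 ≤ ‖x + y‖ - ‖x‖ - (inner ℝ x y : ℝ) / ‖x‖ := by
  rcases eq_or_ne x 0 with rfl | hx
  · simp
  · have ha : (0:ℝ) < ‖x‖ := norm_pos_iff.2 hx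
    have h1 : (inner ℝ x (x + y) : ℝ) ≤ ‖x‖ * ‖x + y‖ := real_inner_le_norm _ _
    rw [inner_add_right, real_inner_self_eq_norm_sq] at h1
    have h2 : (inner ℝ x y : ℝ) / ‖x‖ ≤ ‖x + y‖ - ‖x‖ := by
      rw [div_le_iff₀ ha]; nlinarith
    linarith

lemma rem_le_two (x y : E) : ‖x + y‖ - ‖x‖ - (inner ℝ x y : ℝ) / ‖x‖ ≤ 2 * ‖y‖ := by
  have h1 : ‖x + y‖ - ‖x‖ ≤ ‖y‖ := by
    have := norm_add_le x y; linarith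
  have h2 : |(inner ℝ x y : ℝ) / ‖x‖| ≤ ‖y‖ := by
    rcases eq_or_ne x 0 with rfl | hx
    · simp
    · have ha : (0:ℝ) < ‖x‖ := norm_pos_iff.2 hx
      rw [abs_div, abs_of_pos ha, div_le_iff₀ ha]
      calc |(inner ℝ x y : ℝ)| ≤ ‖x‖ * ‖y‖ := abs_real_inner_le_norm x y
        _ = ‖y‖ * ‖x‖ := mul_comm _ _
  have := abs_le.1 h2
  linarith [this.1]

lemma rem_le_sq (x y : E) (hx : x ≠ 0) :
    ‖x + y‖ - ‖x‖ - (inner ℝ x y : ℝ) / ‖x‖ ≤ ‖y‖ ^ 2 / (2 * ‖x‖) := by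
  have ha : (0:ℝ) < ‖x‖ := norm_pos_iff.2 hx
  have hsq : ‖x + y‖ ^ 2 = ‖x‖ ^ 2 + 2 * (inner ℝ x y : ℝ) + ‖y‖ ^ 2 :=
    norm_add_sq_real x y
  have ht : (0:ℝ) ≤ ‖x + y‖ := norm_nonneg _
  rw [sub_sub, sub_le_iff_le_add]
  have e1 : (inner ℝ x y : ℝ)/‖x‖ * ‖x‖ = inner ℝ x y := div_mul_cancel₀ _ ha.ne'
  have e2 : ‖y‖^2/(2*‖x‖) * (2*‖x‖) = ‖y‖^2 := div_mul_cancel₀ _ (by positivity)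
  nlinarith [sq_nonneg (‖x + y‖ - ‖x‖), mul_pos ha ha]

lemma inner_div_le (x y : E) : |(inner ℝ x y : ℝ) / ‖x‖| ≤ ‖y‖ := by
  rcases eq_or_ne x 0 with rfl | hx
  · simp
  · have ha : (0:ℝ) < ‖x‖ := norm_pos_iff.2 hx
    rw [abs_div, abs_of_pos ha, div_le_iff₀ ha]
    calc |(inner ℝ x y : ℝ)| ≤ ‖x‖ * ‖y‖ := abs_real_inner_le_norm x y
      _ = ‖y‖ * ‖x‖ := mul_comm _ _

end InnerLemmas

abbrev X := C(Set.Icc (0:ℝ) 1, EuclideanSpace ℝ (Fin 3))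

noncomputable def ext' (ψ : X) : ℝ → EuclideanSpace ℝ (Fin 3) :=
  Set.IccExtend zero_le_one ⇑ψ

lemma ext'_cont (ψ : X) : Continuous (ext' ψ) := ψ.continuous.Icc_extend'

lemma ext'_norm_le (ψ : X) (s : ℝ) : ‖ext' ψ s‖ ≤ ‖ψ‖ :=
  ψ.norm_coe_le_norm _

lemma ext'_add (ψ χ : X) : ext' (ψ + χ) = fun s => ext' ψ s + ext' χ s := by
  funext s; simp [ext', Set.IccExtend]

lemma ext'_smul (c : ℝ) (ψ : X) : ext' (c • ψ) = fun s => c • ext' ψ s := by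
  funext s; simp [ext', Set.IccExtend]

noncomputable def wgt (s : ℝ) : ℝ := excMean s / cE

lemma wgt_cont : Continuous wgt := excMean_cont.div_const _
lemma wgt_nonneg (s : ℝ) : 0 ≤ wgt s := div_nonneg (excMean_nonneg s) cE_pos.le
lemma wgt_le (s : ℝ) : wgt s ≤ 4 / cE := div_le_div_of_nonneg_right (excMean_le s) cE_pos.le |>.trans_eq rfl

lemma wgt_integrableOn : IntegrableOn wgt (Set.Ioc (0:ℝ) 1) volume :=
  wgt_cont.integrableOn_Ioc

noncomputable def itg (φ h : X) (s : ℝ) : ℝ :=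
  ((inner ℝ (ext' φ s) (ext' h s) : ℝ) / ‖ext' φ s‖) * wgt s

lemma itg_aesm (φ h : X) : AEStronglyMeasurable (itg φ h) volume := by
  apply Measurable.aestronglyMeasurable
  exact ((Continuous.inner (ext'_cont φ) (ext'_cont h)).measurable.div
    (ext'_cont φ).norm.measurable).mul wgt_cont.measurable

lemma itg_bound (φ h : X) (s : ℝ) : |itg φ h s| ≤ ‖h‖ * wgt s := by
  rw [itg, abs_mul, abs_of_nonneg (wgt_nonneg s)]
  exact mul_le_mul_of_nonneg_right ((inner_div_le _ _).trans (ext'_norm_le h s)) (wgt_nonneg s)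

lemma itg_integrableOn (φ h : X) : IntegrableOn (itg φ h) (Set.Ioc (0:ℝ) 1) volume := by
  apply Measure.integrableOn_of_bounded (M := ‖h‖ * (4 / cE)) (by simp) (itg_aesm φ h)
  filter_upwards with s
  exact (itg_bound φ h s).trans (mul_le_mul_of_nonneg_left (wgt_le s) (norm_nonneg h))

noncomputable def Lfun (φ : X) : X →ₗ[ℝ] ℝ where
  toFun h := ∫ s in Set.Ioc (0:ℝ) 1, itg φ h s
  map_add' h g := by
    rw [← integral_add (itg_integrableOn φ h) (itg_integrableOn φ g)]
    apply setIntegral_congr_fun measurableSet_Ioc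
    intro s _
    simp only [itg, ext'_add, inner_add_right, add_div, add_mul]
  map_smul' c h := by
    rw [RingHom.id_apply, ← integral_smul]
    apply setIntegral_congr_fun measurableSet_Ioc
    intro s _
    simp only [itg, ext'_smul, inner_smul_right, smul_eq_mul, mul_div_assoc, mul_assoc]

lemma Lfun_bound (φ h : X) : ‖Lfun φ h‖ ≤ (4 / cE) * ‖h‖ := by
  have : ‖Lfun φ h‖ ≤ ‖h‖ * (4 / cE) * (volume (Set.Ioc (0:ℝ) 1)).toReal := by
    apply norm_setIntegral_le_of_norm_le_const (by simp)
    · intro s _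
      rw [Real.norm_eq_abs]
      exact (itg_bound φ h s).trans (mul_le_mul_of_nonneg_left (wgt_le s) (norm_nonneg h))
  simpa [Real.volume_Ioc, mul_comm] using this

noncomputable def Lmap (φ : X) : X →L[ℝ] ℝ :=
  (Lfun φ).mkContinuous (4 / cE) (Lfun_bound φ)

lemma Lmap_apply (φ h : X) : Lmap φ h = ∫ s in Set.Ioc (0:ℝ) 1, itg φ h s := rfl

lemma Gamma_eq (ψ : X) : GammaFun ψ = ∫ s in Set.Ioc (0:ℝ) 1, ‖ext' ψ s‖ * wgt s := by
  rw [GammaFun, intervalIntegral.integral_of_le zero_le_one]; rfl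

theorem stmt_10 (φ : C(Set.Icc (0 : ℝ) 1, EuclideanSpace ℝ (Fin 3)))
    (hφ : volume (closure {s : ℝ | s ∈ Set.Icc (0 : ℝ) 1 ∧
        Set.IccExtend zero_le_one (⇑φ) s = 0}) = 0) :
    ∃ L : C(Set.Icc (0 : ℝ) 1, EuclideanSpace ℝ (Fin 3)) →L[ℝ] ℝ,
      HasFDerivAt GammaFun L φ ∧
      ∀ h : C(Set.Icc (0 : ℝ) 1, EuclideanSpace ℝ (Fin 3)),
        L h = ∫ s in (0 : ℝ)..1,
          ((inner ℝ (Set.IccExtend zero_le_one (⇑φ) s)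
              (Set.IccExtend zero_le_one (⇑h) s) : ℝ) /
            ‖Set.IccExtend zero_le_one (⇑φ) s‖) * (excMean s / cE) := by
  refine ⟨Lmap φ, ?_, ?_⟩
  · rw [hasFDerivAt_iff_isLittleO_nhds_zero, Asymptotics.isLittleO_iff]
    intro c hc
    have hMpos : (0:ℝ) < 4 / cE := div_pos (by norm_num) cE_pos
    have hden : (0:ℝ) < 4 * (4 / cE + 1) := by linarith
    -- outer regularity
    obtain ⟨U, hZU, hUo, hUm⟩ :=
      (closure {s : ℝ | s ∈ Set.Icc (0 : ℝ) 1 ∧ Set.IccExtend zero_le_one (⇑φ) s = 0}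
        ).exists_isOpen_lt_of_lt (ENNReal.ofReal (c / (4 * (4/cE + 1))))
        (by rw [hφ]; exact ENNReal.ofReal_pos.2 (div_pos hc hden))
    have hvolU : (volume (Set.Ioc (0:ℝ) 1 ∩ U)).toReal ≤ c / (4 * (4/cE + 1)) :=
      ENNReal.toReal_le_of_le_ofReal (by positivity)
        (le_of_lt (lt_of_le_of_lt (measure_mono Set.inter_subset_right) hUm))
    -- lower bound δ on the complement
    obtain ⟨δ, hδ, hδle⟩ : ∃ δ : ℝ, 0 < δ ∧ ∀ s ∈ Set.Ioc (0:ℝ) 1 \ U, δ ≤ ‖ext' φ s‖ := by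
      rcases (Set.Icc (0:ℝ) 1 \ U).eq_empty_or_nonempty with he | hne
      · refine ⟨1, one_pos, fun s hs => absurd ?_ (Set.notMem_empty s)⟩
        rw [← he]; exact ⟨Set.Ioc_subset_Icc_self hs.1, hs.2⟩
      · obtain ⟨s₀, hs₀K, hmin⟩ := (isCompact_Icc.diff hUo).exists_isMinOn hne
          ((ext'_cont φ).norm.continuousOn)
        refine ⟨‖ext' φ s₀‖, ?_, fun s hs => hmin ⟨Set.Ioc_subset_Icc_self hs.1, hs.2⟩⟩
        rw [norm_pos_iff]
        intro h0
        exact hs₀K.2 (hZU (subset_closure ⟨hs₀K.1, h0⟩))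
    set C₀ := ∫ s in Set.Ioc (0:ℝ) 1, wgt s with hC₀
    have hC₀nn : 0 ≤ C₀ := setIntegral_nonneg measurableSet_Ioc (fun s _ => wgt_nonneg s)
    rw [Metric.eventually_nhds_iff]
    refine ⟨c * δ / (C₀ + 1), div_pos (mul_pos hc hδ) (by linarith), ?_⟩
    intro h hdist
    rw [dist_zero_right] at hdist
    have hhn : (0:ℝ) ≤ ‖h‖ := norm_nonneg h
    -- the remainder function
    set f : ℝ → ℝ := fun s => ‖ext' φ s + ext' h s‖ * wgt s - ‖ext' φ s‖ * wgt s - itg φ h s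
      with hf
    have I1 : IntegrableOn (fun s => ‖ext' φ s + ext' h s‖ * wgt s) (Set.Ioc (0:ℝ) 1) volume :=
      (((ext'_cont φ).add (ext'_cont h)).norm.mul wgt_cont).integrableOn_Ioc
    have I2 : IntegrableOn (fun s => ‖ext' φ s‖ * wgt s) (Set.Ioc (0:ℝ) 1) volume :=
      ((ext'_cont φ).norm.mul wgt_cont).integrableOn_Ioc
    have If : IntegrableOn f (Set.Ioc (0:ℝ) 1) volume :=
      (I1.sub I2).sub (itg_integrableOn φ h)
    have hdiff : GammaFun (φ + h) - GammaFun φ - Lmap φ h = ∫ s in Set.Ioc (0:ℝ) 1, f s := by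
      have hGam : (∫ s in Set.Ioc (0:ℝ) 1, ‖ext' (φ + h) s‖ * wgt s)
          = ∫ s in Set.Ioc (0:ℝ) 1, ‖ext' φ s + ext' h s‖ * wgt s :=
        setIntegral_congr_fun measurableSet_Ioc (fun s _ => by rw [ext'_add])
      rw [Gamma_eq, Gamma_eq, Lmap_apply, hGam, ← integral_sub I1 I2]
      exact (integral_sub (I1.sub I2) (itg_integrableOn φ h)).symm
    have hfid : ∀ s : ℝ, f s =
        (‖ext' φ s + ext' h s‖ - ‖ext' φ s‖ - (inner ℝ (ext' φ s) (ext' h s) : ℝ) / ‖ext' φ s‖)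
          * wgt s := by
      intro s; simp only [hf, itg]; ring
    have hf0 : ∀ s : ℝ, 0 ≤ f s := fun s => by
      rw [hfid s]; exact mul_nonneg (rem_nonneg _ _) (wgt_nonneg s)
    have hb1 : ∀ s : ℝ, f s ≤ 2 * ‖h‖ * wgt s := fun s => by
      rw [hfid s]
      refine mul_le_mul_of_nonneg_right ((rem_le_two _ _).trans ?_) (wgt_nonneg s)
      have := ext'_norm_le h s; linarith
    have hb2 : ∀ s ∈ Set.Ioc (0:ℝ) 1 \ U, f s ≤ ‖h‖ ^ 2 / (2 * δ) * wgt s := by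
      intro s hs
      have hne : ext' φ s ≠ 0 := by
        intro h0
        have := hδle s hs; rw [h0, norm_zero] at this; linarith
      rw [hfid s]
      refine mul_le_mul_of_nonneg_right ((rem_le_sq _ _ hne).trans ?_) (wgt_nonneg s)
      apply div_le_div₀ (by positivity)
      · exact pow_le_pow_left₀ (norm_nonneg _) (ext'_norm_le h s) 2
      · linarith
      · linarith [hδle s hs]
    -- split the integral
    have hsplit : (∫ s in Set.Ioc (0:ℝ) 1, f s) =
        (∫ s in Set.Ioc (0:ℝ) 1 ∩ U, f s) + ∫ s in Set.Ioc (0:ℝ) 1 \ U, f s :=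
      (integral_inter_add_diff hUo.measurableSet If).symm
    -- first piece
    have hpiece1 : (∫ s in Set.Ioc (0:ℝ) 1 ∩ U, f s) ≤ c / 2 * ‖h‖ := by
      have e1 : (∫ s in Set.Ioc (0:ℝ) 1 ∩ U, f s) ≤
          ∫ s in Set.Ioc (0:ℝ) 1 ∩ U, 2 * ‖h‖ * wgt s := by
        refine setIntegral_mono_on (If.mono_set Set.inter_subset_left)
          ((wgt_integrableOn.mono_set Set.inter_subset_left).const_mul _)
          (measurableSet_Ioc.inter hUo.measurableSet) (fun s _ => hb1 s)
      have e2 : (∫ s in Set.Ioc (0:ℝ) 1 ∩ U, 2 * ‖h‖ * wgt s) =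
          2 * ‖h‖ * ∫ s in Set.Ioc (0:ℝ) 1 ∩ U, wgt s := integral_const_mul _ _
      have e3 : (∫ s in Set.Ioc (0:ℝ) 1 ∩ U, wgt s) ≤
          (4 / cE) * (volume (Set.Ioc (0:ℝ) 1 ∩ U)).toReal := by
        have := setIntegral_mono_on (wgt_integrableOn.mono_set Set.inter_subset_left)
          (integrableOn_const ((lt_of_le_of_lt
            (measure_mono Set.inter_subset_left) (by simp)).ne))
          (measurableSet_Ioc.inter hUo.measurableSet)
          (fun s _ => wgt_le s)
        rwa [setIntegral_const, smul_eq_mul, mul_comm] at this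
      have e4 : (4 / cE) * (volume (Set.Ioc (0:ℝ) 1 ∩ U)).toReal ≤ c / 4 := by
        have h5 : (4/cE) * (c / (4 * (4/cE + 1))) ≤ c / 4 := by
          rw [mul_div_assoc', div_le_div_iff₀ hden (by norm_num)]
          nlinarith [mul_pos hc hMpos]
        calc (4 / cE) * (volume (Set.Ioc (0:ℝ) 1 ∩ U)).toReal
            ≤ (4/cE) * (c / (4 * (4/cE + 1))) := by
              exact mul_le_mul_of_nonneg_left hvolU hMpos.le
          _ ≤ c / 4 := h5
      have hwnn : 0 ≤ ∫ s in Set.Ioc (0:ℝ) 1 ∩ U, wgt s :=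
        setIntegral_nonneg (measurableSet_Ioc.inter hUo.measurableSet) (fun s _ => wgt_nonneg s)
      calc (∫ s in Set.Ioc (0:ℝ) 1 ∩ U, f s)
          ≤ 2 * ‖h‖ * ∫ s in Set.Ioc (0:ℝ) 1 ∩ U, wgt s := by rw [← e2]; exact e1
        _ ≤ 2 * ‖h‖ * (c/4) := by
            refine mul_le_mul_of_nonneg_left (e3.trans e4) (by positivity)
        _ = c / 2 * ‖h‖ := by ring
    -- second piece
    have hpiece2 : (∫ s in Set.Ioc (0:ℝ) 1 \ U, f s) ≤ c / 2 * ‖h‖ := by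
      have e1 : (∫ s in Set.Ioc (0:ℝ) 1 \ U, f s) ≤
          ∫ s in Set.Ioc (0:ℝ) 1 \ U, ‖h‖ ^ 2 / (2 * δ) * wgt s :=
        setIntegral_mono_on (If.mono_set Set.diff_subset)
          ((wgt_integrableOn.mono_set Set.diff_subset).const_mul _)
          (measurableSet_Ioc.diff hUo.measurableSet) hb2
      have e2 : (∫ s in Set.Ioc (0:ℝ) 1 \ U, ‖h‖ ^ 2 / (2 * δ) * wgt s) =
          ‖h‖ ^ 2 / (2 * δ) * ∫ s in Set.Ioc (0:ℝ) 1 \ U, wgt s := integral_const_mul _ _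
      have e3 : (∫ s in Set.Ioc (0:ℝ) 1 \ U, wgt s) ≤ C₀ := by
        rw [hC₀]
        refine setIntegral_mono_set wgt_integrableOn ?_ ?_
        · exact Filter.Eventually.of_forall (fun s => wgt_nonneg s)
        · exact HasSubset.Subset.eventuallyLE Set.diff_subset
      have key : ‖h‖ * (C₀ + 1) ≤ c * δ := by
        rw [lt_div_iff₀ (by linarith : (0:ℝ) < C₀ + 1)] at hdist
        linarith
      calc (∫ s in Set.Ioc (0:ℝ) 1 \ U, f s)
          ≤ ‖h‖ ^ 2 / (2 * δ) * ∫ s in Set.Ioc (0:ℝ) 1 \ U, wgt s := by rw [← e2]; exact e1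
        _ ≤ ‖h‖ ^ 2 / (2 * δ) * C₀ := by
            refine mul_le_mul_of_nonneg_left e3 (by positivity)
        _ ≤ c / 2 * ‖h‖ := by
            rw [div_mul_eq_mul_div, div_le_iff₀ (by linarith : (0:ℝ) < 2 * δ)]
            nlinarith [mul_le_mul_of_nonneg_left key hhn]
    -- conclude
    have hInn : 0 ≤ ∫ s in Set.Ioc (0:ℝ) 1, f s :=
      setIntegral_nonneg measurableSet_Ioc (fun s _ => hf0 s)
    rw [hdiff]
    rw [Real.norm_eq_abs, abs_of_nonneg hInn]
    calc (∫ s in Set.Ioc (0:ℝ) 1, f s)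
        = (∫ s in Set.Ioc (0:ℝ) 1 ∩ U, f s) + ∫ s in Set.Ioc (0:ℝ) 1 \ U, f s := hsplit
      _ ≤ c / 2 * ‖h‖ + c / 2 * ‖h‖ := add_le_add hpiece1 hpiece2
      _ = c * ‖h‖ := by ring
  · intro h
    rw [Lmap_apply, ← intervalIntegral.integral_of_le zero_le_one]
    rfl
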